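/- For every t ≥ 1 with n_t^- ≥ 1 and n_t^+ ≥ 1, the recursively computed weight vector w_t = (S_t^- + S_t^+ + b·I)⁻¹ (z_t^- + z_t^+) equals the batch total-error-rate solution computed from all samples seen up to time t, namely w_t = ((1/n_t^-) Σ_{i ≤ t, y_i = -1} x_i x_iᵀ + (1/n_t^+) Σ_{i ≤ t, y_i = 1} x_i x_iᵀ + b·I)⁻¹ ((1/n_t^-) Σ_{i ≤ t, y_i = -1} y_i x_i + (1/n_t^+) Σ_{i ≤ t, y_i = 1} y_i x_i), and consequently w_t is the unique global minimizer of the objective J_t(w) = (1/(2 n_t^-)) Σ_{i ≤ t, y_i = -1} (y_i − wᵀ x_i)² + (1/(2 n_t^+)) Σ_{i ≤ t, y_i = 1} (y_i − wᵀ x_i)² + (b/2) ‖w‖². -/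

import Mathlib

open Matrix Finset

lemma avg_rec {M : Type*} [AddCommGroup M] [Module ℝ M]
    (p : ℕ → Prop) [DecidablePred p] (v : ℕ → M) (n : ℕ → ℕ)
    (hn : ∀ t, n t = ((Finset.Icc 1 t).filter p).card)
    (c : ℕ → ℝ)
    (hc : ∀ t, 1 ≤ t → (p t → c t = (n t : ℝ)⁻¹) ∧ (¬ p t → c t = 0))
    (S : ℕ → M) (hS0 : S 0 = 0)
    (hrec : ∀ t, 1 ≤ t → S t = S (t - 1) + c t • (v t - S (t - 1))) :
    ∀ t, S t = (n t : ℝ)⁻¹ • ∑ i ∈ (Finset.Icc 1 t).filter p, v i := by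
  intro t
  induction t with
  | zero => simp [hS0, hn]
  | succ k ih =>
    have hk1 : 1 ≤ k + 1 := Nat.le_add_left 1 k
    have hIcc : Finset.Icc 1 (k+1) = insert (k+1) (Finset.Icc 1 k) := by
      rw [← Finset.insert_Icc_right_eq_Icc_add_one hk1]
    have hrec' := hrec (k+1) hk1
    simp only [Nat.add_sub_cancel] at hrec'
    by_cases hp : p (k+1)
    · have hc' := (hc (k+1) hk1).1 hp
      have hnk : n (k+1) = n k + 1 := by
        rw [hn, hn, hIcc, Finset.filter_insert, if_pos hp,
          Finset.card_insert_of_notMem (by simp)]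
      have hfilter : ((Finset.Icc 1 (k+1)).filter p)
          = insert (k+1) ((Finset.Icc 1 k).filter p) := by
        rw [hIcc, Finset.filter_insert, if_pos hp]
      rw [hrec', hc', ih, hfilter, Finset.sum_insert (by simp), hnk]
      by_cases h0 : n k = 0
      · have : ((Finset.Icc 1 k).filter p) = ∅ := by
          rw [← Finset.card_eq_zero, ← hn, h0]
        simp [this, h0]
      · have hnkpos : (0:ℝ) < n k := by positivity
        have hnk1 : (0:ℝ) < (n k : ℝ) + 1 := by positivity
        push_cast
        match_scalars <;> (field_simp; try ring)
    · have hc' := (hc (k+1) hk1).2 hp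
      have hnk : n (k+1) = n k := by
        rw [hn, hn, hIcc, Finset.filter_insert, if_neg hp]
      have hfilter : ((Finset.Icc 1 (k+1)).filter p) = ((Finset.Icc 1 k).filter p) := by
        rw [hIcc, Finset.filter_insert, if_neg hp]
      rw [hrec', hc', hfilter, hnk, ih]
      simp

lemma dot_vecMulVec {d : ℕ} (u a c v : Fin d → ℝ) :
    u ⬝ᵥ (vecMulVec a c *ᵥ v) = (u ⬝ᵥ a) * (c ⬝ᵥ v) := by
  simp only [dotProduct, mulVec, vecMulVec_apply, Finset.mul_sum, Finset.sum_mul]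
  rw [Finset.sum_comm]
  apply Finset.sum_congr rfl
  intro j _
  apply Finset.sum_congr rfl
  intro i _
  ring

lemma quad_expand {d : ℕ} (b : ℝ) (N P : Finset ℕ) (x : ℕ → Fin d → ℝ) (an ap : ℝ)
    (u v : Fin d → ℝ) :
    u ⬝ᵥ ((an • ∑ i ∈ N, vecMulVec (x i) (x i) + ap • ∑ i ∈ P, vecMulVec (x i) (x i)
        + b • (1 : Matrix (Fin d) (Fin d) ℝ)) *ᵥ v)
    = an * ∑ i ∈ N, (u ⬝ᵥ x i) * (x i ⬝ᵥ v)
      + ap * ∑ i ∈ P, (u ⬝ᵥ x i) * (x i ⬝ᵥ v) + b * (u ⬝ᵥ v) := by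
  have hsum : ∀ (Q : Finset ℕ) (q : ℝ),
      u ⬝ᵥ ((q • ∑ i ∈ Q, vecMulVec (x i) (x i)) *ᵥ v)
        = q * ∑ i ∈ Q, (u ⬝ᵥ x i) * (x i ⬝ᵥ v) := by
    intro Q q
    rw [Matrix.smul_mulVec, dotProduct_smul, smul_eq_mul]
    congr 1
    induction Q using Finset.induction with
    | empty => simp [Matrix.zero_mulVec]
    | insert _ _ hni ih =>
      rw [Finset.sum_insert hni, Finset.sum_insert hni, Matrix.add_mulVec,
        dotProduct_add, dot_vecMulVec, ih]
  rw [Matrix.add_mulVec, Matrix.add_mulVec, dotProduct_add, dotProduct_add,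
    hsum N an, hsum P ap, Matrix.smul_mulVec, Matrix.one_mulVec,
    dotProduct_smul, smul_eq_mul]

lemma dot_sum {d : ℕ} (u : Fin d → ℝ) (Q : Finset ℕ) (f : ℕ → Fin d → ℝ) :
    u ⬝ᵥ (∑ i ∈ Q, f i) = ∑ i ∈ Q, u ⬝ᵥ f i := by
  induction Q using Finset.induction with
  | empty => simp
  | insert _ _ h ih => rw [Finset.sum_insert h, Finset.sum_insert h, dotProduct_add, ih]

/-- For every `t ≥ 1` with `n_t⁻ ≥ 1` and `n_t⁺ ≥ 1`, the recursively computed weight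
vector `w t = (Sneg t + Spos t + b·I)⁻¹ (zneg t + zpos t)` equals the batch
total-error-rate solution computed from all samples seen up to time `t`, and
consequently `w t` is the unique global minimizer of the time-indexed
total-error-rate objective `J t`. -/
theorem nonit_reweighted_rls_converges_to_batch
    (d : ℕ) (hd : 0 < d) (b : ℝ) (hb : 0 < b)
    (x : ℕ → Fin d → ℝ) (y : ℕ → ℝ)
    (hy : ∀ t : ℕ, 1 ≤ t → y t = -1 ∨ y t = 1)
    (nneg npos : ℕ → ℕ)
    (hnneg : ∀ t : ℕ, nneg t = ((Finset.Icc 1 t).filter (fun i => y i = -1)).card)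
    (hnpos : ∀ t : ℕ, npos t = ((Finset.Icc 1 t).filter (fun i => y i = 1)).card)
    (Sneg Spos : ℕ → Matrix (Fin d) (Fin d) ℝ) (zneg zpos : ℕ → Fin d → ℝ)
    (hSneg0 : Sneg 0 = 0) (hSpos0 : Spos 0 = 0) (hzneg0 : zneg 0 = 0) (hzpos0 : zpos 0 = 0)
    (hSneg : ∀ t : ℕ, 1 ≤ t →
      Sneg t = Sneg (t - 1) +
        ((1 - y t) / (2 * (nneg t : ℝ))) • (vecMulVec (x t) (x t) - Sneg (t - 1)))
    (hSpos : ∀ t : ℕ, 1 ≤ t →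
      Spos t = Spos (t - 1) +
        ((1 + y t) / (2 * (npos t : ℝ))) • (vecMulVec (x t) (x t) - Spos (t - 1)))
    (hzneg : ∀ t : ℕ, 1 ≤ t →
      zneg t = zneg (t - 1) +
        ((1 - y t) / (2 * (nneg t : ℝ))) • (y t • x t - zneg (t - 1)))
    (hzpos : ∀ t : ℕ, 1 ≤ t →
      zpos t = zpos (t - 1) +
        ((1 + y t) / (2 * (npos t : ℝ))) • (y t • x t - zpos (t - 1)))
    (w : ℕ → Fin d → ℝ)
    (hw : ∀ t : ℕ,
      w t = (Sneg t + Spos t + b • (1 : Matrix (Fin d) (Fin d) ℝ))⁻¹ *ᵥ (zneg t + zpos t))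
    (J : ℕ → (Fin d → ℝ) → ℝ)
    (hJ : ∀ t : ℕ, ∀ u : Fin d → ℝ,
      J t u = (1 / (2 * (nneg t : ℝ))) *
                ∑ i ∈ (Finset.Icc 1 t).filter (fun i => y i = -1), (y i - u ⬝ᵥ x i) ^ 2
            + (1 / (2 * (npos t : ℝ))) *
                ∑ i ∈ (Finset.Icc 1 t).filter (fun i => y i = 1), (y i - u ⬝ᵥ x i) ^ 2
            + (b / 2) * (u ⬝ᵥ u)) :
    ∀ t : ℕ, 1 ≤ t → 1 ≤ nneg t → 1 ≤ npos t →
      (w t =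
        (((nneg t : ℝ))⁻¹ •
            ∑ i ∈ (Finset.Icc 1 t).filter (fun i => y i = -1), vecMulVec (x i) (x i)
          + ((npos t : ℝ))⁻¹ •
            ∑ i ∈ (Finset.Icc 1 t).filter (fun i => y i = 1), vecMulVec (x i) (x i)
          + b • (1 : Matrix (Fin d) (Fin d) ℝ))⁻¹ *ᵥ
        (((nneg t : ℝ))⁻¹ •
            ∑ i ∈ (Finset.Icc 1 t).filter (fun i => y i = -1), y i • x i
          + ((npos t : ℝ))⁻¹ •
            ∑ i ∈ (Finset.Icc 1 t).filter (fun i => y i = 1), y i • x i)) ∧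
      (∀ u : Fin d → ℝ,
        J t (w t) ≤ J t u ∧ (J t u = J t (w t) → u = w t)) := by
  intro t ht htneg htpos
  -- coefficient hypotheses for the averaging lemma
  have hcneg : ∀ s, 1 ≤ s →
      ((fun i => y i = -1) s → (1 - y s) / (2 * (nneg s : ℝ)) = ((nneg s : ℕ) : ℝ)⁻¹) ∧
      (¬ (fun i => y i = -1) s → (1 - y s) / (2 * (nneg s : ℝ)) = 0) := by
    intro s hs
    constructor
    · intro h
      have hpos : 0 < nneg s := by
        rw [hnneg]
        exact Finset.card_pos.mpr ⟨s, Finset.mem_filter.mpr ⟨Finset.mem_Icc.mpr ⟨hs, le_refl s⟩, h⟩⟩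
      have hne : ((nneg s : ℝ)) ≠ 0 := by positivity
      rw [h]
      rw [show (1:ℝ) - (-1) = 2 by norm_num]
      rw [eq_comm, inv_eq_iff_eq_inv, inv_div]
      field_simp
    · intro h
      rcases hy s hs with h1 | h1
      · exact absurd h1 h
      · rw [h1]; simp
  have hcpos : ∀ s, 1 ≤ s →
      ((fun i => y i = 1) s → (1 + y s) / (2 * (npos s : ℝ)) = ((npos s : ℕ) : ℝ)⁻¹) ∧
      (¬ (fun i => y i = 1) s → (1 + y s) / (2 * (npos s : ℝ)) = 0) := by
    intro s hs
    constructor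
    · intro h
      have hpos : 0 < npos s := by
        rw [hnpos]
        exact Finset.card_pos.mpr ⟨s, Finset.mem_filter.mpr ⟨Finset.mem_Icc.mpr ⟨hs, le_refl s⟩, h⟩⟩
      have hne : ((npos s : ℝ)) ≠ 0 := by positivity
      rw [h]
      rw [show (1:ℝ) + 1 = 2 by norm_num]
      rw [eq_comm, inv_eq_iff_eq_inv, inv_div]
      field_simp
    · intro h
      rcases hy s hs with h1 | h1
      · rw [h1]; simp
      · exact absurd h1 h
  have hSneg' := avg_rec (fun i => y i = -1) (fun i => vecMulVec (x i) (x i)) nneg hnneg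
    (fun s => (1 - y s) / (2 * (nneg s : ℝ))) hcneg Sneg hSneg0 hSneg t
  have hzneg' := avg_rec (fun i => y i = -1) (fun i => y i • x i) nneg hnneg
    (fun s => (1 - y s) / (2 * (nneg s : ℝ))) hcneg zneg hzneg0 hzneg t
  have hSpos' := avg_rec (fun i => y i = 1) (fun i => vecMulVec (x i) (x i)) npos hnpos
    (fun s => (1 + y s) / (2 * (npos s : ℝ))) hcpos Spos hSpos0 hSpos t
  have hzpos' := avg_rec (fun i => y i = 1) (fun i => y i • x i) npos hnpos
    (fun s => (1 + y s) / (2 * (npos s : ℝ))) hcpos zpos hzpos0 hzpos t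
  have hpart1 : w t =
      (((nneg t : ℝ))⁻¹ •
          ∑ i ∈ (Finset.Icc 1 t).filter (fun i => y i = -1), vecMulVec (x i) (x i)
        + ((npos t : ℝ))⁻¹ •
          ∑ i ∈ (Finset.Icc 1 t).filter (fun i => y i = 1), vecMulVec (x i) (x i)
        + b • (1 : Matrix (Fin d) (Fin d) ℝ))⁻¹ *ᵥ
      (((nneg t : ℝ))⁻¹ •
          ∑ i ∈ (Finset.Icc 1 t).filter (fun i => y i = -1), y i • x i
        + ((npos t : ℝ))⁻¹ •
          ∑ i ∈ (Finset.Icc 1 t).filter (fun i => y i = 1), y i • x i) := by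
    rw [hw t, hSneg', hSpos', hzneg', hzpos']
  refine ⟨hpart1, ?_⟩
  -- notation
  set N := (Finset.Icc 1 t).filter (fun i => y i = -1) with hN
  set P := (Finset.Icc 1 t).filter (fun i => y i = 1) with hP
  set an : ℝ := ((nneg t : ℝ))⁻¹ with han
  set ap : ℝ := ((npos t : ℝ))⁻¹ with hap
  set A : Matrix (Fin d) (Fin d) ℝ :=
    an • ∑ i ∈ N, vecMulVec (x i) (x i) + ap • ∑ i ∈ P, vecMulVec (x i) (x i)
      + b • (1 : Matrix (Fin d) (Fin d) ℝ) with hA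
  set zv : Fin d → ℝ := an • ∑ i ∈ N, y i • x i + ap • ∑ i ∈ P, y i • x i with hzv
  have han0 : 0 ≤ an := by positivity
  have hap0 : 0 ≤ ap := by positivity
  have hQ : ∀ u v : Fin d → ℝ, u ⬝ᵥ (A *ᵥ v)
      = an * ∑ i ∈ N, (u ⬝ᵥ x i) * (x i ⬝ᵥ v)
        + ap * ∑ i ∈ P, (u ⬝ᵥ x i) * (x i ⬝ᵥ v) + b * (u ⬝ᵥ v) := by
    intro u v
    rw [hA]
    exact quad_expand b N P x an ap u v
  have hdotself : ∀ v : Fin d → ℝ, 0 ≤ v ⬝ᵥ v :=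
    fun v => Finset.sum_nonneg fun i _ => mul_self_nonneg _
  have hQge : ∀ v : Fin d → ℝ, b * (v ⬝ᵥ v) ≤ v ⬝ᵥ (A *ᵥ v) := by
    intro v
    rw [hQ v v]
    have h1 : 0 ≤ an * ∑ i ∈ N, (v ⬝ᵥ x i) * (x i ⬝ᵥ v) :=
      mul_nonneg han0 (Finset.sum_nonneg fun i _ => by
        rw [dotProduct_comm (x i) v]; exact mul_self_nonneg _)
    have h2 : 0 ≤ ap * ∑ i ∈ P, (v ⬝ᵥ x i) * (x i ⬝ᵥ v) :=
      mul_nonneg hap0 (Finset.sum_nonneg fun i _ => by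
        rw [dotProduct_comm (x i) v]; exact mul_self_nonneg _)
    linarith
  have hQpos : ∀ v : Fin d → ℝ, v ≠ 0 → 0 < v ⬝ᵥ (A *ᵥ v) := by
    intro v hv
    have h1 : v ⬝ᵥ v ≠ 0 := fun h => hv (dotProduct_self_eq_zero.mp h)
    have h2 : 0 < v ⬝ᵥ v := lt_of_le_of_ne (hdotself v) (Ne.symm h1)
    calc (0:ℝ) < b * (v ⬝ᵥ v) := by positivity
    _ ≤ v ⬝ᵥ (A *ᵥ v) := hQge v
  have hinj : Function.Injective A.mulVec := by
    intro u v h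
    by_contra hne
    have hsub : u - v ≠ 0 := sub_ne_zero.mpr hne
    have h0 : A *ᵥ (u - v) = 0 := by
      rw [Matrix.mulVec_sub, h, sub_self]
    have := hQpos (u - v) hsub
    rw [h0, dotProduct_zero] at this
    exact lt_irrefl 0 this
  have hunit : IsUnit A := Matrix.mulVec_injective_iff_isUnit.mp hinj
  have hAinv : A * A⁻¹ = 1 := Matrix.mul_nonsing_inv A ((Matrix.isUnit_iff_isUnit_det A).mp hunit)
  have hAw : A *ᵥ w t = zv := by
    rw [hpart1]
    rw [Matrix.mulVec_mulVec, hAinv, Matrix.one_mulVec]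
  have hsym : ∀ u v : Fin d → ℝ, u ⬝ᵥ (A *ᵥ v) = v ⬝ᵥ (A *ᵥ u) := by
    intro u v
    have hterm : ∀ Q : Finset ℕ, ∑ i ∈ Q, (u ⬝ᵥ x i) * (x i ⬝ᵥ v)
        = ∑ i ∈ Q, (v ⬝ᵥ x i) * (x i ⬝ᵥ u) := by
      intro Q
      refine Finset.sum_congr rfl fun i _ => ?_
      rw [dotProduct_comm u (x i), dotProduct_comm (x i) v, mul_comm]
    rw [hQ u v, hQ v u, hterm N, hterm P, dotProduct_comm u v]
  have hdotz : ∀ u : Fin d → ℝ, u ⬝ᵥ zv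
      = an * ∑ i ∈ N, y i * (u ⬝ᵥ x i) + ap * ∑ i ∈ P, y i * (u ⬝ᵥ x i) := by
    intro u
    rw [hzv, dotProduct_add, dotProduct_smul, dotProduct_smul, dot_sum, dot_sum,
      smul_eq_mul, smul_eq_mul]
    congr 2
    · exact Finset.sum_congr rfl fun i _ => by rw [dotProduct_smul, smul_eq_mul]
    · exact Finset.sum_congr rfl fun i _ => by rw [dotProduct_smul, smul_eq_mul]
  have hJQ : ∀ u : Fin d → ℝ, J t u = (u ⬝ᵥ (A *ᵥ u)) / 2 - u ⬝ᵥ zv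
      + ((1 / (2 * (nneg t : ℝ))) * ∑ i ∈ N, (y i) ^ 2
        + (1 / (2 * (npos t : ℝ))) * ∑ i ∈ P, (y i) ^ 2) := by
    intro u
    rw [hJ t u, hQ u u, hdotz u]
    have hsq : ∀ Q : Finset ℕ, ∑ i ∈ Q, (y i - u ⬝ᵥ x i) ^ 2
        = ∑ i ∈ Q, (y i) ^ 2 - 2 * ∑ i ∈ Q, y i * (u ⬝ᵥ x i) + ∑ i ∈ Q, (u ⬝ᵥ x i) ^ 2 := by
      intro Q
      rw [Finset.mul_sum, ← Finset.sum_sub_distrib, ← Finset.sum_add_distrib]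
      exact Finset.sum_congr rfl fun i _ => by ring
    have hterm2 : ∀ Q : Finset ℕ, ∑ i ∈ Q, (u ⬝ᵥ x i) * (x i ⬝ᵥ u)
        = ∑ i ∈ Q, (u ⬝ᵥ x i) ^ 2 := by
      intro Q
      exact Finset.sum_congr rfl fun i _ => by rw [dotProduct_comm (x i) u]; ring
    rw [hsq N, hsq P, hterm2 N, hterm2 P, han, hap]
    have hnneg0 : ((nneg t : ℝ)) ≠ 0 := by positivity
    have hnpos0 : ((npos t : ℝ)) ≠ 0 := by positivity
    field_simp
    ring
  have hdiff : ∀ u : Fin d → ℝ,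
      J t u = J t (w t) + ((u - w t) ⬝ᵥ (A *ᵥ (u - w t))) / 2 := by
    intro u
    have h1 : (u - w t) ⬝ᵥ (A *ᵥ (u - w t))
        = u ⬝ᵥ (A *ᵥ u) - 2 * (u ⬝ᵥ zv) + w t ⬝ᵥ zv := by
      rw [Matrix.mulVec_sub, hAw, dotProduct_sub, sub_dotProduct, sub_dotProduct,
        hsym (w t) u, hAw]
      ring
    have hQw : w t ⬝ᵥ (A *ᵥ w t) = w t ⬝ᵥ zv := by rw [hAw]
    rw [hJQ u, hJQ (w t), h1, hQw]
    ring
  intro u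
  have hnonneg : 0 ≤ (u - w t) ⬝ᵥ (A *ᵥ (u - w t)) := by
    by_cases h : u - w t = 0
    · rw [h]; simp
    · exact le_of_lt (hQpos _ h)
  constructor
  · rw [hdiff u]; linarith
  · intro heq
    rw [hdiff u] at heq
    have h0 : (u - w t) ⬝ᵥ (A *ᵥ (u - w t)) = 0 := by linarith
    by_contra hne
    exact absurd h0 (ne_of_gt (hQpos _ (sub_ne_zero.mpr hne)))
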